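/- arXiv:1608.02463 — 5 statements merged into one kernel-verified Lean document; each statement's English description precedes it below -/
import Mathlib

section
/- Let μ be a finite Borel measure on [a,b] with a,b ∈ spt μ. Then there exists a constant C > 0 such that for every f ∈ W^1_2(a,b) ∩ C[a,b], one has ‖f‖_∞ ≤ C (‖f'‖²_{L²(a,b)} + ‖f‖²_{L²([a,b],μ)})^{1/2}. -/
open MeasureTheory Set

/-- **Sobolev-type sup-norm estimate.**
Let `μ` be a finite Borel measure on `[a,b]` with `a, b ∈ spt μ`. Then there is `C > 0`
such that every `f ∈ W^1_2(a,b) ∩ C[a,b]` (encoded via a continuous representative `f`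
with weak derivative `f' ∈ L²(a,b)`, related by the fundamental theorem of calculus)
satisfies `‖f‖_∞ ≤ C (‖f'‖²_{L²(a,b)} + ‖f‖²_{L²([a,b],μ)})^{1/2}`. -/
theorem sup_norm_estimate (a b : ℝ) (hab : a < b) (μ : Measure ℝ) [IsFiniteMeasure μ]
    (hμc : μ (Set.Icc a b)ᶜ = 0)
    (hsa : ∀ ε > 0, 0 < μ (Set.Ico a (a + ε)))
    (hsb : ∀ ε > 0, 0 < μ (Set.Ioc (b - ε) b)) :
    ∃ C > (0:ℝ), ∀ f f' : ℝ → ℝ,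
      ContinuousOn f (Set.Icc a b) →
      MemLp f' 2 (volume.restrict (Set.Ioo a b)) →
      (∀ x ∈ Set.Icc a b, f x = f a + ∫ t in a..x, f' t) →
      ∀ x ∈ Set.Icc a b,
        |f x| ≤ C * Real.sqrt ((∫ t in Set.Ioo a b, (f' t) ^ 2)
                      + ∫ t, (f t) ^ 2 ∂μ) := by
  have hba : (0:ℝ) < b - a := by linarith
  have hμIcc_pos : 0 < μ (Set.Icc a b) := by
    refine lt_of_lt_of_le (hsa (b - a) hba) (measure_mono ?_)
    intro t ht
    exact ⟨ht.1, by linarith [ht.2]⟩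
  set M : ℝ := (μ (Set.Icc a b)).toReal with hM
  have hMpos : 0 < M := ENNReal.toReal_pos hμIcc_pos.ne' (measure_ne_top μ _)
  refine ⟨Real.sqrt (b - a) + 1 / Real.sqrt M, by positivity, ?_⟩
  intro f f' hfc hf' hFTC x hx
  have hres : μ.restrict (Set.Icc a b) = μ := by
    apply Measure.restrict_eq_self_of_ae_mem
    rw [ae_iff]
    exact hμc
  haveI : IsFiniteMeasure (volume.restrict (Set.Ioo a b)) := by
    constructor
    rw [Measure.restrict_apply_univ]
    exact measure_Ioo_lt_top
  have hint : IntegrableOn f' (Set.Ioo a b) volume := hf'.integrable one_le_two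
  have hintIcc : IntegrableOn f' (Set.Icc a b) volume :=
    (integrableOn_Icc_iff_integrableOn_Ioo).mpr hint
  obtain ⟨y, hy, hmin⟩ := isCompact_Icc.exists_isMinOn (nonempty_Icc.mpr hab.le)
    ((hfc.pow 2) : ContinuousOn (fun z => f z ^ 2) (Set.Icc a b))
  set A := ∫ t in Set.Ioo a b, (f' t) ^ 2 with hA
  set B := ∫ t, (f t) ^ 2 ∂μ with hB
  have hA0 : 0 ≤ A := integral_nonneg fun t => sq_nonneg _
  have hB0 : 0 ≤ B := integral_nonneg fun t => sq_nonneg _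
  -- Cauchy–Schwarz
  have hCS : ∫ t in Set.Ioo a b, |f' t| ≤ Real.sqrt A * Real.sqrt (b - a) := by
    have h22 : Real.HolderConjugate 2 2 := ⟨by norm_num, by norm_num, by norm_num⟩
    have h1 : MemLp f' (ENNReal.ofReal 2) (volume.restrict (Set.Ioo a b)) := by
      have : ENNReal.ofReal 2 = 2 := by norm_num
      rw [this]; exact hf'
    have h2 : MemLp (fun _ : ℝ => (1:ℝ)) (ENNReal.ofReal 2)
        (volume.restrict (Set.Ioo a b)) := memLp_const 1
    have key := integral_mul_norm_le_Lp_mul_Lq h22 h1 h2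
    have e1 : ∫ t in Set.Ioo a b, ‖f' t‖ ^ (2:ℝ) = A := by
      rw [hA]
      refine integral_congr_ae (Filter.Eventually.of_forall fun t => ?_)
      show ‖f' t‖ ^ (2:ℝ) = f' t ^ 2
      rw [show (2:ℝ) = ((2:ℕ):ℝ) by norm_num, Real.rpow_natCast, Real.norm_eq_abs, sq_abs]
    have e2 : ∫ _t in Set.Ioo a b, ‖(1:ℝ)‖ ^ (2:ℝ) = b - a := by
      simp [Real.volume_Ioo, ENNReal.toReal_ofReal hba.le, hab.le]
    rw [e1, e2] at key
    have e3 : ∫ t in Set.Ioo a b, ‖f' t‖ * ‖(1:ℝ)‖ = ∫ t in Set.Ioo a b, |f' t| := by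
      simp [Real.norm_eq_abs]
    rw [e3] at key
    calc ∫ t in Set.Ioo a b, |f' t| ≤ A ^ (1/(2:ℝ)) * (b - a) ^ (1/(2:ℝ)) := key
      _ = Real.sqrt A * Real.sqrt (b - a) := by
          rw [Real.sqrt_eq_rpow, Real.sqrt_eq_rpow]
  -- interval integrability
  have hii : ∀ z ∈ Set.Icc a b, IntervalIntegrable f' volume a z := fun z hz =>
    (hintIcc.mono_set (Set.uIcc_subset_Icc (Set.left_mem_Icc.mpr hab.le) hz)).intervalIntegrable
  have hdiff : f x - f y = ∫ t in y..x, f' t := by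
    have h := intervalIntegral.integral_interval_sub_left (hii x hx) (hii y hy)
    rw [hFTC x hx, hFTC y hy]
    linarith [h]
  have hsubset : Set.uIcc y x ⊆ Set.Icc a b := Set.uIcc_subset_Icc hy hx
  have hbd1 : |f x - f y| ≤ Real.sqrt A * Real.sqrt (b - a) := by
    rw [hdiff]
    calc |∫ t in y..x, f' t| = ‖∫ t in y..x, f' t‖ := (Real.norm_eq_abs _).symm
      _ ≤ ∫ t in Set.uIoc y x, ‖f' t‖ :=
          intervalIntegral.norm_integral_le_integral_norm_uIoc
      _ ≤ ∫ t in Set.Icc a b, |f' t| := by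
          refine setIntegral_mono_set hintIcc.abs
            (Filter.Eventually.of_forall fun t => abs_nonneg _) ?_
          exact Filter.Eventually.of_forall fun t ht =>
            hsubset (Set.uIoc_subset_uIcc ht)
      _ = ∫ t in Set.Ioo a b, |f' t| := integral_Icc_eq_integral_Ioo
      _ ≤ Real.sqrt A * Real.sqrt (b - a) := hCS
  -- bound on the minimum point
  have hyB : (f y) ^ 2 * M ≤ B := by
    have hBe : B = ∫ t in Set.Icc a b, (f t) ^ 2 ∂μ := by rw [hB, hres]
    rw [hBe]
    exact setIntegral_ge_of_const_le_real measurableSet_Icc (measure_ne_top μ _)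
      (fun z hz => hmin hz)
      (ContinuousOn.integrableOn_compact isCompact_Icc (hfc.pow 2))
  have hfy : |f y| ≤ Real.sqrt B / Real.sqrt M := by
    have h1 : (f y) ^ 2 ≤ B / M := (le_div_iff₀ hMpos).mpr hyB
    calc |f y| = Real.sqrt ((f y) ^ 2) := (Real.sqrt_sq_eq_abs _).symm
      _ ≤ Real.sqrt (B / M) := Real.sqrt_le_sqrt h1
      _ = Real.sqrt B / Real.sqrt M := Real.sqrt_div hB0 M
  have hsM : 0 < Real.sqrt M := Real.sqrt_pos.mpr hMpos
  calc |f x| = |f y + (f x - f y)| := by ring_nf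
    _ ≤ |f y| + |f x - f y| := abs_add_le _ _
    _ ≤ Real.sqrt B / Real.sqrt M + Real.sqrt A * Real.sqrt (b - a) :=
        add_le_add hfy hbd1
    _ ≤ Real.sqrt (A + B) / Real.sqrt M + Real.sqrt (A + B) * Real.sqrt (b - a) := by
        gcongr
        · linarith
        · linarith
    _ = (Real.sqrt (b - a) + 1 / Real.sqrt M) * Real.sqrt (A + B) := by
        field_simp
        ring
end

section
/- Let μ be a finite Borel measure on [a,b] with a ∈ spt μ. Then for every r ∈ (0, b−a] and every f ∈ W^1_2(a,b) ∩ C[a,b], one has |f(a)| ≤ r^{1/2} ‖f'‖_{L²(a,a+r)} + ‖f‖_{L²([a,a+r],μ)} · μ([a,a+r])^{−1/2}. -/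
open MeasureTheory Set

/-- **Boundary value estimate.**
Let `μ` be a finite Borel measure on `[a,b]` with `a ∈ spt μ` (so `μ([a,a+r]) > 0` for all
`r > 0`).  Then for every `r ∈ (0, b-a]` and every `f ∈ W^1_2(a,b) ∩ C[a,b]` (encoded via a
continuous representative `f` with weak derivative `f'`),
`|f(a)| ≤ r^{1/2} ‖f'‖_{L²(a,a+r)} + ‖f‖_{L²([a,a+r],μ)} μ([a,a+r])^{-1/2}`. -/
theorem boundary_value_estimate (a b : ℝ) (hab : a < b) (μ : Measure ℝ) [IsFiniteMeasure μ]
    (hμc : μ (Set.Icc a b)ᶜ = 0)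
    (hsa : ∀ ε > 0, 0 < μ (Set.Ico a (a + ε)))
    (r : ℝ) (hr0 : 0 < r) (hr : r ≤ b - a)
    (f f' : ℝ → ℝ)
    (hf : ContinuousOn f (Set.Icc a b))
    (hf' : MemLp f' 2 (volume.restrict (Set.Ioo a b)))
    (hftc : ∀ x ∈ Set.Icc a b, f x = f a + ∫ t in a..x, f' t) :
    |f a| ≤ Real.sqrt r * Real.sqrt (∫ t in Set.Ioo a (a + r), (f' t) ^ 2)
      + Real.sqrt (∫ t in Set.Icc a (a + r), (f t) ^ 2 ∂μ)
        * (μ (Set.Icc a (a + r))).toReal ^ (-(1:ℝ)/2) := by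
  have har : a + r ≤ b := by linarith
  set A := Real.sqrt r * Real.sqrt (∫ t in Set.Ioo a (a + r), (f' t) ^ 2) with hA
  set S := ∫ t in Set.Icc a (a + r), (f t) ^ 2 ∂μ with hS
  set m := (μ (Set.Icc a (a + r))).toReal with hm
  -- Memℒp of f' on Ioo a (a+r)
  have hmem : MemLp f' 2 (volume.restrict (Set.Ioo a (a + r))) := by
    have h := hf'.restrict (Set.Ioo a (a + r))
    rwa [Measure.restrict_restrict measurableSet_Ioo,
      Set.inter_eq_self_of_subset_left (Set.Ioo_subset_Ioo_right har)] at h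
  have hint2 : IntegrableOn (fun t => f' t ^ 2) (Set.Ioo a (a + r)) volume :=
    hmem.integrable_sq
  have hS2nonneg : 0 ≤ ∫ t in Set.Ioo a (a + r), (f' t) ^ 2 :=
    setIntegral_nonneg measurableSet_Ioo fun t _ => sq_nonneg _
  -- key pointwise estimate
  have hkey : ∀ x ∈ Set.Icc a (a + r), |f a| ≤ |f x| + A := by
    intro x hx
    obtain ⟨hax, hxr⟩ := hx
    have hxb : x ∈ Set.Icc a b := ⟨hax, by linarith⟩
    have hrestr_eq : volume.restrict (Set.Ioc a x) = volume.restrict (Set.Ioo a x) :=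
      (Measure.restrict_congr_set Ioo_ae_eq_Ioc).symm
    have hmemx : MemLp f' 2 (volume.restrict (Set.Ioc a x)) := by
      rw [hrestr_eq]
      have h := hmem.restrict (Set.Ioo a x)
      rwa [Measure.restrict_restrict measurableSet_Ioo,
        Set.inter_eq_self_of_subset_left (Set.Ioo_subset_Ioo_right hxr)] at h
    -- Hölder on Ioc a x
    have hHolder : ∫ t in Set.Ioc a x, |f' t|
        ≤ (∫ t in Set.Ioc a x, |f' t| ^ (2:ℝ)) ^ (1/(2:ℝ))
          * (∫ t in Set.Ioc a x, (1:ℝ) ^ (2:ℝ)) ^ (1/(2:ℝ)) := by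
      have := MeasureTheory.integral_mul_le_Lp_mul_Lq_of_nonneg
        (μ := volume.restrict (Set.Ioc a x)) (by constructor <;> norm_num : Real.HolderConjugate 2 2)
        (f := fun t => |f' t|) (g := fun _ => (1:ℝ))
        (Filter.Eventually.of_forall fun t => abs_nonneg _)
        (Filter.Eventually.of_forall fun t => zero_le_one)
        (by rw [show ENNReal.ofReal (2:ℝ) = 2 by norm_num]; exact hmemx.abs)
        (by rw [show ENNReal.ofReal (2:ℝ) = 2 by norm_num]; exact memLp_const (1:ℝ))
      simpa using this
    have hvol : (∫ t in Set.Ioc a x, (1:ℝ) ^ (2:ℝ)) = x - a := by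
      simp [Real.volume_Ioc, hax, ENNReal.toReal_ofReal (by linarith : (0:ℝ) ≤ x - a)]
    have hsq_eq : (∫ t in Set.Ioc a x, |f' t| ^ (2:ℝ))
        = ∫ t in Set.Ioo a x, f' t ^ 2 := by
      rw [← hrestr_eq]
      apply setIntegral_congr_ae measurableSet_Ioc
      filter_upwards with t _
      rw [show (2:ℝ) = ((2:ℕ):ℝ) by norm_num, Real.rpow_natCast, sq_abs]
    have hmono : (∫ t in Set.Ioo a x, f' t ^ 2) ≤ ∫ t in Set.Ioo a (a + r), f' t ^ 2 :=
      setIntegral_mono_set hint2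
        (Filter.Eventually.of_forall fun t => sq_nonneg _)
        (HasSubset.Subset.eventuallyLE (Set.Ioo_subset_Ioo_right hxr))
    -- bound interval integral
    have hIabs : |∫ t in a..x, f' t| ≤ ∫ t in Set.Ioc a x, |f' t| := by
      rw [intervalIntegral.integral_of_le hax]
      calc |∫ t in Set.Ioc a x, f' t| = ‖∫ t in Set.Ioc a x, f' t‖ := (Real.norm_eq_abs _).symm
        _ ≤ ∫ t in Set.Ioc a x, ‖f' t‖ := norm_integral_le_integral_norm _
        _ = ∫ t in Set.Ioc a x, |f' t| := by simp [Real.norm_eq_abs]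
    have hbound : |∫ t in a..x, f' t| ≤ A := by
      have h1 : (∫ t in Set.Ioc a x, |f' t| ^ (2:ℝ)) ^ (1/(2:ℝ))
          ≤ Real.sqrt (∫ t in Set.Ioo a (a + r), f' t ^ 2) := by
        rw [hsq_eq, Real.sqrt_eq_rpow]
        exact Real.rpow_le_rpow (setIntegral_nonneg measurableSet_Ioo fun t _ => sq_nonneg _)
          hmono (by norm_num)
      have h2 : (∫ t in Set.Ioc a x, (1:ℝ) ^ (2:ℝ)) ^ (1/(2:ℝ)) ≤ Real.sqrt r := by
        rw [hvol, Real.sqrt_eq_rpow]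
        exact Real.rpow_le_rpow (by linarith) (by linarith) (by norm_num)
      calc |∫ t in a..x, f' t| ≤ ∫ t in Set.Ioc a x, |f' t| := hIabs
        _ ≤ (∫ t in Set.Ioc a x, |f' t| ^ (2:ℝ)) ^ (1/(2:ℝ))
            * (∫ t in Set.Ioc a x, (1:ℝ) ^ (2:ℝ)) ^ (1/(2:ℝ)) := hHolder
        _ ≤ Real.sqrt (∫ t in Set.Ioo a (a + r), f' t ^ 2) * Real.sqrt r := by
            apply mul_le_mul h1 h2 (Real.rpow_nonneg (by rw [hvol]; linarith) _)
              (Real.sqrt_nonneg _)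
        _ = A := by rw [hA, mul_comm]
    have := hftc x hxb
    have : |f a| ≤ |f x| + |∫ t in a..x, f' t| := by
      rw [this]
      calc |f a| = |(f a + ∫ t in a..x, f' t) - ∫ t in a..x, f' t| := by ring_nf
        _ ≤ |f a + ∫ t in a..x, f' t| + |∫ t in a..x, f' t| := abs_sub _ _
    linarith
  -- nonnegativity facts
  have hAnonneg : 0 ≤ A := mul_nonneg (Real.sqrt_nonneg _) (Real.sqrt_nonneg _)
  have hm_pos : 0 < m := by
    refine ENNReal.toReal_pos ?_ (measure_ne_top μ _)
    have := hsa r hr0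
    exact (lt_of_lt_of_le this (measure_mono Set.Ico_subset_Icc_self)).ne'
  have hBnonneg : 0 ≤ Real.sqrt S * m ^ (-(1:ℝ)/2) :=
    mul_nonneg (Real.sqrt_nonneg _) (Real.rpow_nonneg hm_pos.le _)
  rcases le_or_gt (|f a|) A with hc | hc
  · linarith
  -- main case
  set c := |f a| - A with hcdef
  have hcpos : 0 < c := by simp only [hcdef]; linarith
  have hfx : ∀ x ∈ Set.Icc a (a + r), c ≤ |f x| := fun x hx => by
    have := hkey x hx; simp only [hcdef]; linarith
  have hintf : IntegrableOn (fun x => f x ^ 2) (Set.Icc a (a + r)) μ := by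
    have hcont : ContinuousOn (fun x => f x ^ 2) (Set.Icc a (a + r)) :=
      (hf.mono (Set.Icc_subset_Icc_right har)).pow 2
    exact hcont.integrableOn_compact isCompact_Icc
  have hlow : c ^ 2 * m ≤ S := by
    have h1 : ∫ _x in Set.Icc a (a + r), c ^ 2 ∂μ ≤ S := by
      refine setIntegral_mono_on ((integrableOn_const_iff).mpr (Or.inr (measure_lt_top μ _)))
        hintf measurableSet_Icc fun x hx => ?_
      calc c ^ 2 ≤ |f x| ^ 2 := pow_le_pow_left₀ hcpos.le (hfx x hx) 2
        _ = f x ^ 2 := sq_abs _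
    rwa [setIntegral_const, smul_eq_mul, mul_comm] at h1
  have hSnonneg : 0 ≤ S := le_trans (by positivity) hlow
  have hB2 : (Real.sqrt S * m ^ (-(1:ℝ)/2)) ^ 2 = S * m⁻¹ := by
    rw [mul_pow, Real.sq_sqrt hSnonneg, ← Real.rpow_natCast (m ^ (-(1:ℝ)/2)) 2,
      ← Real.rpow_mul hm_pos.le]
    norm_num [Real.rpow_neg_one]
  have hcB : c ≤ Real.sqrt S * m ^ (-(1:ℝ)/2) := by
    have hsq : c ^ 2 ≤ (Real.sqrt S * m ^ (-(1:ℝ)/2)) ^ 2 := by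
      rw [hB2]
      rw [← div_eq_mul_inv, le_div_iff₀ hm_pos]
      exact hlow
    calc c = Real.sqrt (c ^ 2) := (Real.sqrt_sq hcpos.le).symm
      _ ≤ Real.sqrt ((Real.sqrt S * m ^ (-(1:ℝ)/2)) ^ 2) := Real.sqrt_le_sqrt hsq
      _ = Real.sqrt S * m ^ (-(1:ℝ)/2) := Real.sqrt_sq hBnonneg
  simp only [hcdef] at hcB
  linarith
end

section
/- Let μ be a finite Borel measure on [a,b] with a,b ∈ spt μ and μ({a,b}) = 0. Then the restriction of the canonical map κ : W^1_2(a,b) ∩ C[a,b] → L²([a,b],μ), κf = f, to W^1_{2,μ}(a,b) is injective. -/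
open MeasureTheory Set

/-- Membership in `W^1_{2,μ}(a,b) = W^1_2(a,b) ∩ C_μ[a,b]`:  `f` is continuous on `[a,b]`,
has a weak derivative in `L²(a,b)` (encoded via the fundamental theorem of calculus), and
is affine linear on the connected components of `[a,b] \ spt μ` (encoded as: affine on every
subinterval of `μ`-measure zero). -/
def MemW12mu (a b : ℝ) (μ : Measure ℝ) (f : ℝ → ℝ) : Prop :=
  ContinuousOn f (Set.Icc a b) ∧
  (∃ f' : ℝ → ℝ, MemLp f' 2 (volume.restrict (Set.Ioo a b)) ∧
     ∀ x ∈ Set.Icc a b, f x = f a + ∫ t in a..x, f' t) ∧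
  (∀ c d : ℝ, a ≤ c → c < d → d ≤ b → μ (Set.Ioo c d) = 0 →
     ∃ m q : ℝ, ∀ x ∈ Set.Icc c d, f x = m * x + q)

/-- **Injectivity of `κ` on `W^1_{2,μ}(a,b)`.**
Let `μ` be a finite Borel measure on `[a,b]` with `a, b ∈ spt μ` and `μ({a,b}) = 0`.
If `f, g ∈ W^1_{2,μ}(a,b)` agree `μ`-a.e., then they agree everywhere on `[a,b]`;
i.e. the canonical map `κ : W^1_2 ∩ C[a,b] → L²([a,b],μ)` is injective on `W^1_{2,μ}`. -/
theorem kappa_restrict_injective (a b : ℝ) (hab : a < b) (μ : Measure ℝ) [IsFiniteMeasure μ]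
    (hμc : μ (Set.Icc a b)ᶜ = 0)
    (hsa : ∀ ε > 0, 0 < μ (Set.Ico a (a + ε)))
    (hsb : ∀ ε > 0, 0 < μ (Set.Ioc (b - ε) b))
    (hab0 : μ {a, b} = 0)
    (f g : ℝ → ℝ) (hf : MemW12mu a b μ f) (hg : MemW12mu a b μ g)
    (hae : f =ᵐ[μ] g) :
    Set.EqOn f g (Set.Icc a b) := by
  classical
  have hμN : μ {t | f t ≠ g t} = 0 := by
    have := hae
    rw [Filter.EventuallyEq, ae_iff] at this
    exact this
  obtain ⟨hfc, -, hfaff⟩ := hf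
  obtain ⟨hgc, -, hgaff⟩ := hg
  have hcont : ContinuousOn (fun t => f t - g t) (Icc a b) := hfc.sub hgc
  -- f a = g a
  have ha0 : f a = g a := by
    by_contra hne
    have hca : ContinuousWithinAt (fun t => f t - g t) (Icc a b) a :=
      hcont a (left_mem_Icc.2 hab.le)
    have hne' : f a - g a ∈ ({0}ᶜ : Set ℝ) := by
      simpa [sub_eq_zero] using hne
    have hev := hca (isOpen_compl_singleton.mem_nhds hne')
    rw [Filter.mem_map, mem_nhdsWithin] at hev
    obtain ⟨U, hUopen, haU, hUsub⟩ := hev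
    obtain ⟨ε, hε, hball⟩ := Metric.isOpen_iff.1 hUopen a haU
    have hsub : Ico a (a + ε) ⊆ {t | f t ≠ g t} ∪ (Icc a b)ᶜ := by
      intro t ht
      by_cases htI : t ∈ Icc a b
      · left
        have htU : t ∈ U := hball (by
          rw [Metric.mem_ball, Real.dist_eq, abs_lt]
          constructor <;> [linarith [ht.1]; linarith [ht.2]])
        have := hUsub ⟨htU, htI⟩
        simpa [sub_eq_zero] using this
      · right; exact htI
    have hz : μ (Ico a (a + ε)) = 0 := by
      refine le_antisymm ?_ zero_le
      calc μ (Ico a (a + ε)) ≤ μ ({t | f t ≠ g t} ∪ (Icc a b)ᶜ) := measure_mono hsub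
        _ ≤ μ {t | f t ≠ g t} + μ (Icc a b)ᶜ := measure_union_le _ _
        _ = 0 := by rw [hμN, hμc, add_zero]
    exact absurd hz (hsa ε hε).ne'
  -- f b = g b
  have hb0 : f b = g b := by
    by_contra hne
    have hcb : ContinuousWithinAt (fun t => f t - g t) (Icc a b) b :=
      hcont b (right_mem_Icc.2 hab.le)
    have hne' : f b - g b ∈ ({0}ᶜ : Set ℝ) := by
      simpa [sub_eq_zero] using hne
    have hev := hcb (isOpen_compl_singleton.mem_nhds hne')
    rw [Filter.mem_map, mem_nhdsWithin] at hev
    obtain ⟨U, hUopen, hbU, hUsub⟩ := hev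
    obtain ⟨ε, hε, hball⟩ := Metric.isOpen_iff.1 hUopen b hbU
    have hsub : Ioc (b - ε) b ⊆ {t | f t ≠ g t} ∪ (Icc a b)ᶜ := by
      intro t ht
      by_cases htI : t ∈ Icc a b
      · left
        have htU : t ∈ U := hball (by
          rw [Metric.mem_ball, Real.dist_eq, abs_lt]
          constructor <;> linarith [ht.1, ht.2])
        have := hUsub ⟨htU, htI⟩
        simpa [sub_eq_zero] using this
      · right; exact htI
    have hz : μ (Ioc (b - ε) b) = 0 := by
      refine le_antisymm ?_ zero_le
      calc μ (Ioc (b - ε) b) ≤ μ ({t | f t ≠ g t} ∪ (Icc a b)ᶜ) := measure_mono hsub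
        _ ≤ μ {t | f t ≠ g t} + μ (Icc a b)ᶜ := measure_union_le _ _
        _ = 0 := by rw [hμN, hμc, add_zero]
    exact absurd hz (hsb ε hε).ne'
  -- main argument
  intro x hx
  by_contra hne
  set Z : Set ℝ := {t | t ∈ Icc a b ∧ f t = g t} with hZdef
  have hZclosed : IsClosed Z := by
    have hEq : Z = Icc a b ∩ (fun t => f t - g t) ⁻¹' ({0} : Set ℝ) := by
      ext t
      simp only [hZdef, mem_setOf_eq, mem_inter_iff, mem_preimage, mem_singleton_iff,
        sub_eq_zero]
    rw [hEq]
    exact hcont.preimage_isClosed_of_isClosed isClosed_Icc isClosed_singleton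
  have haZ : a ∈ Z := ⟨left_mem_Icc.2 hab.le, ha0⟩
  have hbZ : b ∈ Z := ⟨right_mem_Icc.2 hab.le, hb0⟩
  set Zl : Set ℝ := Z ∩ Icc a x with hZldef
  set Zr : Set ℝ := Z ∩ Icc x b with hZrdef
  have hZl_ne : a ∈ Zl := ⟨haZ, ⟨le_refl a, hx.1⟩⟩
  have hZr_ne : b ∈ Zr := ⟨hbZ, ⟨hx.2, le_refl b⟩⟩
  have hZl_bdd : BddAbove Zl := ⟨x, fun t ht => ht.2.2⟩
  have hZr_bdd : BddBelow Zr := ⟨x, fun t ht => ht.2.1⟩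
  set c : ℝ := sSup Zl with hcdef
  set d : ℝ := sInf Zr with hddef
  have hcZl : c ∈ Zl := (hZclosed.inter isClosed_Icc).csSup_mem ⟨a, hZl_ne⟩ hZl_bdd
  have hdZr : d ∈ Zr := (hZclosed.inter isClosed_Icc).csInf_mem ⟨b, hZr_ne⟩ hZr_bdd
  have hcx : c < x := lt_of_le_of_ne hcZl.2.2 (fun h => hne (h ▸ hcZl.1.2))
  have hxd : x < d := lt_of_le_of_ne (hdZr.2.1) (fun h => hne (by rw [h]; exact hdZr.1.2))
  have hac : a ≤ c := hcZl.1.1.1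
  have hdb : d ≤ b := hdZr.1.1.2
  have hcd : c < d := hcx.trans hxd
  -- μ (Ioo c d) = 0
  have hμcd : μ (Ioo c d) = 0 := by
    have hsub : Ioo c d ⊆ {t | f t ≠ g t} := by
      intro t ht
      by_contra htN
      have hfg : f t = g t := not_not.mp htN
      have htab : t ∈ Icc a b := ⟨hac.trans ht.1.le, ht.2.le.trans hdb⟩
      rcases le_total t x with htx | hxt
      · have : t ≤ c := le_csSup hZl_bdd ⟨⟨htab, hfg⟩, ⟨htab.1, htx⟩⟩
        exact absurd this (not_le.2 ht.1)
      · have : d ≤ t := csInf_le hZr_bdd ⟨⟨htab, hfg⟩, ⟨hxt, htab.2⟩⟩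
        exact absurd this (not_le.2 ht.2)
    exact le_antisymm ((measure_mono hsub).trans hμN.le) zero_le
  obtain ⟨m₁, q₁, hfa⟩ := hfaff c d hac hcd hdb hμcd
  obtain ⟨m₂, q₂, hga⟩ := hgaff c d hac hcd hdb hμcd
  have e1 : m₁ * c + q₁ = m₂ * c + q₂ := by
    rw [← hfa c ⟨le_refl c, hcd.le⟩, ← hga c ⟨le_refl c, hcd.le⟩]
    exact hcZl.1.2
  have e2 : m₁ * d + q₁ = m₂ * d + q₂ := by
    rw [← hfa d ⟨hcd.le, le_refl d⟩, ← hga d ⟨hcd.le, le_refl d⟩]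
    exact hdZr.1.2
  have h3 : (m₁ - m₂) * (d - c) = 0 := by linear_combination e2 - e1
  have hm : m₁ = m₂ := by
    rcases mul_eq_zero.1 h3 with h | h
    · linarith [sub_eq_zero.1 h]
    · exact absurd (sub_eq_zero.1 h) (ne_of_gt hcd)
  have hq : q₁ = q₂ := by
    rw [hm] at e1; linarith
  exact hne (by rw [hfa x ⟨hcx.le, hxd.le⟩, hga x ⟨hcx.le, hxd.le⟩, hm, hq])
end

section
/- Let μ be a finite Borel measure on [a,b] with a,b ∈ spt μ and μ({a,b}) = 0, and let ι := (κ|_{W^1_{2,μ}(a,b)})^{−1}. If f ∈ D(ι) is real-valued, then |f| ∈ D(ι) and (ι|f|)(a) = |ιf(a)| and (ι|f|)(b) = |ιf(b)|. -/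
open MeasureTheory Set

namespace IotaAbsAux

open intervalIntegral Filter


/-- The support-type set. -/
def SS (a b : ℝ) (μ : Measure ℝ) : Set ℝ :=
  {x | x ∈ Icc a b ∧ ∀ ε > 0, 0 < μ (Ioo (x - ε) (x + ε))}

lemma SS_subset {a b : ℝ} {μ : Measure ℝ} : SS a b μ ⊆ Icc a b := fun _ hx => hx.1

lemma isClosed_SS {a b : ℝ} {μ : Measure ℝ} : IsClosed (SS a b μ) := by
  rw [← isOpen_compl_iff, isOpen_iff_forall_mem_open]
  intro x hx
  by_cases hxI : x ∈ Icc a b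
  · have hx' : ¬ ∀ ε > 0, 0 < μ (Ioo (x - ε) (x + ε)) := fun h => hx ⟨hxI, h⟩
    push_neg at hx'
    obtain ⟨ε, hε, hμε⟩ := hx'
    refine ⟨Ioo (x - ε/2) (x + ε/2), ?_, isOpen_Ioo, ?_⟩
    · intro y hy hyS
      have h2 : 0 < μ (Ioo (y - ε/2) (y + ε/2)) := hyS.2 (ε/2) (by linarith)
      have hsub : Ioo (y - ε/2) (y + ε/2) ⊆ Ioo (x - ε) (x + ε) := by
        intro t ht
        obtain ⟨h1, h2'⟩ := ht
        obtain ⟨hy1, hy2⟩ := hy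
        constructor <;> linarith
      exact absurd (measure_mono_null hsub (le_antisymm hμε zero_le)) (ne_of_gt h2)
    · constructor <;> simp <;> linarith
  · refine ⟨(Icc a b)ᶜ, fun y hy hyS => hy hyS.1, (isClosed_Icc).isOpen_compl, hxI⟩

lemma mem_SS_a {a b : ℝ} {μ : Measure ℝ} (hab : a ≤ b)
    (hsa : ∀ ε > 0, 0 < μ (Ico a (a + ε))) : a ∈ SS a b μ := by
  refine ⟨⟨le_refl a, hab⟩, fun ε hε => ?_⟩
  have := hsa ε hε
  refine this.trans_le (measure_mono ?_)
  intro t ht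
  exact ⟨by linarith [ht.1], ht.2⟩

lemma mem_SS_b {a b : ℝ} {μ : Measure ℝ} (hab : a ≤ b)
    (hsb : ∀ ε > 0, 0 < μ (Ioc (b - ε) b)) : b ∈ SS a b μ := by
  refine ⟨⟨hab, le_refl b⟩, fun ε hε => ?_⟩
  have := hsb ε hε
  refine this.trans_le (measure_mono ?_)
  intro t ht
  exact ⟨ht.1, by linarith [ht.2]⟩

lemma not_mem_SS {a b : ℝ} {μ : Measure ℝ} {x : ℝ} (hxI : x ∈ Icc a b) (hx : x ∉ SS a b μ) :
    ∃ ε > 0, μ (Ioo (x - ε) (x + ε)) = 0 := by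
  by_contra h
  push_neg at h
  exact hx ⟨hxI, fun ε hε => (h ε hε).bot_lt⟩

lemma null_compl_SS {a b : ℝ} {μ : Measure ℝ} (hμc : μ (Icc a b)ᶜ = 0) :
    μ (SS a b μ)ᶜ = 0 := by
  have h1 : μ (Icc a b \ SS a b μ) = 0 := by
    refine measure_null_of_locally_null _ fun x hx => ?_
    obtain ⟨ε, hε, hμε⟩ := not_mem_SS hx.1 hx.2
    exact ⟨Ioo (x - ε) (x + ε), mem_nhdsWithin_of_mem_nhds
      (Ioo_mem_nhds (by linarith) (by linarith)), hμε⟩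
  have : (SS a b μ)ᶜ ⊆ (Icc a b)ᶜ ∪ (Icc a b \ SS a b μ) := by
    intro x hx
    by_cases h : x ∈ Icc a b
    · exact Or.inr ⟨h, hx⟩
    · exact Or.inl h
  exact measure_mono_null this (measure_union_null hμc h1)

noncomputable def cg (a b : ℝ) (μ : Measure ℝ) (x : ℝ) : ℝ := sSup (SS a b μ ∩ Icc a x)
noncomputable def dg (a b : ℝ) (μ : Measure ℝ) (x : ℝ) : ℝ := sInf (SS a b μ ∩ Icc x b)

open Classical in
/-- `w`, the candidate function: `|u|` on `SS`, linear interpolation on gaps. -/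
noncomputable def W (a b : ℝ) (μ : Measure ℝ) (u : ℝ → ℝ) (x : ℝ) : ℝ :=
  if x ∈ SS a b μ ∨ x ∉ Icc a b then |u x|
  else |u (cg a b μ x)| +
    (x - cg a b μ x) * ((|u (dg a b μ x)| - |u (cg a b μ x)|) / (dg a b μ x - cg a b μ x))

section Gap

variable {a b : ℝ} {μ : Measure ℝ}

lemma W_of_mem {u : ℝ → ℝ} {x : ℝ} (hx : x ∈ SS a b μ) : W a b μ u x = |u x| := by
  rw [W, if_pos (Or.inl hx)]

lemma compact_left (haS : a ∈ SS a b μ) {x : ℝ} (hx : x ∈ Icc a b) :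
    IsCompact (SS a b μ ∩ Icc a x) ∧ (SS a b μ ∩ Icc a x).Nonempty :=
  ⟨(isCompact_Icc (a := a) (b := x)).of_isClosed_subset
      (isClosed_SS.inter isClosed_Icc) inter_subset_right,
   ⟨a, haS, le_refl a, hx.1⟩⟩

lemma compact_right (hbS : b ∈ SS a b μ) {x : ℝ} (hx : x ∈ Icc a b) :
    IsCompact (SS a b μ ∩ Icc x b) ∧ (SS a b μ ∩ Icc x b).Nonempty :=
  ⟨(isCompact_Icc (a := x) (b := b)).of_isClosed_subset
      (isClosed_SS.inter isClosed_Icc) inter_subset_right,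
   ⟨b, hbS, hx.2, le_refl b⟩⟩

lemma cg_mem (haS : a ∈ SS a b μ) {x : ℝ} (hx : x ∈ Icc a b) :
    cg a b μ x ∈ SS a b μ ∩ Icc a x := by
  obtain ⟨hc, hne⟩ := compact_left haS hx
  exact hc.sSup_mem hne

lemma dg_mem (hbS : b ∈ SS a b μ) {x : ℝ} (hx : x ∈ Icc a b) :
    dg a b μ x ∈ SS a b μ ∩ Icc x b := by
  obtain ⟨hc, hne⟩ := compact_right hbS hx
  exact hc.sInf_mem hne

lemma le_cg (haS : a ∈ SS a b μ) {x s : ℝ} (hx : x ∈ Icc a b)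
    (hs : s ∈ SS a b μ ∩ Icc a x) : s ≤ cg a b μ x :=
  le_csSup (compact_left haS hx).1.bddAbove hs

lemma dg_le (hbS : b ∈ SS a b μ) {x s : ℝ} (hx : x ∈ Icc a b)
    (hs : s ∈ SS a b μ ∩ Icc x b) : dg a b μ x ≤ s :=
  csInf_le (compact_right hbS hx).1.bddBelow hs

lemma cg_lt (haS : a ∈ SS a b μ) {x : ℝ} (hx : x ∈ Icc a b) (hxS : x ∉ SS a b μ) :
    cg a b μ x < x := by
  rcases lt_or_eq_of_le (cg_mem haS hx).2.2 with h | h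
  · exact h
  · exact absurd (h ▸ (cg_mem haS hx).1) hxS

lemma lt_dg (hbS : b ∈ SS a b μ) {x : ℝ} (hx : x ∈ Icc a b) (hxS : x ∉ SS a b μ) :
    x < dg a b μ x := by
  rcases lt_or_eq_of_le (dg_mem hbS hx).2.1 with h | h
  · exact h
  · exact absurd (h ▸ (dg_mem hbS hx).1) hxS

lemma gap_disjoint (haS : a ∈ SS a b μ) (hbS : b ∈ SS a b μ) {x : ℝ}
    (hx : x ∈ Icc a b) {t : ℝ} (ht : t ∈ Ioo (cg a b μ x) (dg a b μ x)) : t ∉ SS a b μ := by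
  intro htS
  rcases le_or_gt t x with h | h
  · have : t ≤ cg a b μ x := le_cg haS hx ⟨htS, (SS_subset htS).1, h⟩
    exact absurd ht.1 (not_lt.mpr this)
  · have : dg a b μ x ≤ t := dg_le hbS hx ⟨htS, h.le, (SS_subset htS).2⟩
    exact absurd ht.2 (not_lt.mpr this)

lemma gap_null (haS : a ∈ SS a b μ) (hbS : b ∈ SS a b μ) {x : ℝ}
    (hx : x ∈ Icc a b) : μ (Ioo (cg a b μ x) (dg a b μ x)) = 0 := by
  refine measure_null_of_locally_null _ fun t ht => ?_
  have htI : t ∈ Icc a b := ⟨(cg_mem haS hx).2.1.trans ht.1.le, ht.2.le.trans (dg_mem hbS hx).2.2⟩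
  obtain ⟨ε, hε, hμε⟩ := not_mem_SS htI (gap_disjoint haS hbS hx ht)
  exact ⟨Ioo (t - ε) (t + ε), mem_nhdsWithin_of_mem_nhds
    (Ioo_mem_nhds (by linarith) (by linarith)), hμε⟩

lemma cg_const (haS : a ∈ SS a b μ) (hbS : b ∈ SS a b μ) {x : ℝ}
    (hx : x ∈ Icc a b) {z : ℝ} (hz : z ∈ Ioo (cg a b μ x) (dg a b μ x)) :
    cg a b μ z = cg a b μ x ∧ dg a b μ z = dg a b μ x := by
  have hzI : z ∈ Icc a b := ⟨(cg_mem haS hx).2.1.trans hz.1.le, hz.2.le.trans (dg_mem hbS hx).2.2⟩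
  constructor
  · refine le_antisymm ?_ ?_
    · refine csSup_le (compact_left haS hzI).2 fun s hs => ?_
      by_contra hlt
      push_neg at hlt
      refine gap_disjoint haS hbS hx ⟨hlt, ?_⟩ hs.1
      exact lt_of_le_of_lt hs.2.2 hz.2
    · exact le_cg haS hzI ⟨(cg_mem haS hx).1, (cg_mem haS hx).2.1, hz.1.le⟩
  · refine le_antisymm ?_ ?_
    · exact dg_le hbS hzI ⟨(dg_mem hbS hx).1, hz.2.le, (dg_mem hbS hx).2.2⟩
    · refine le_csInf (compact_right hbS hzI).2 fun s hs => ?_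
      by_contra hlt
      push_neg at hlt
      refine gap_disjoint haS hbS hx ⟨?_, hlt⟩ hs.1
      exact lt_of_lt_of_le hz.1 hs.2.1

/-- On the closed gap `[cg x, dg x]`, `W` is the linear interpolation. -/
lemma W_gap (haS : a ∈ SS a b μ) (hbS : b ∈ SS a b μ) {u : ℝ → ℝ} {x : ℝ}
    (hx : x ∈ Icc a b) (hxS : x ∉ SS a b μ) {z : ℝ}
    (hz : z ∈ Icc (cg a b μ x) (dg a b μ x)) :
    W a b μ u z = |u (cg a b μ x)| + (z - cg a b μ x) *
      ((|u (dg a b μ x)| - |u (cg a b μ x)|) / (dg a b μ x - cg a b μ x)) := by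
  set c := cg a b μ x with hc
  set d := dg a b μ x with hd
  have hcd : c < d := (cg_lt haS hx hxS).trans (lt_dg hbS hx hxS)
  rcases eq_or_lt_of_le hz.1 with h1 | h1
  · rw [← h1, W_of_mem (cg_mem haS hx).1]
    simp
    rfl
  rcases eq_or_lt_of_le hz.2 with h2 | h2
  · rw [h2, W_of_mem (dg_mem hbS hx).1]
    have h3 : (d - c) * ((|u d| - |u c|) / (d - c)) = |u d| - |u c| :=
      mul_div_cancel₀ _ (by linarith)
    rw [h3]; ring
  have hzI : z ∈ Icc a b := ⟨(cg_mem haS hx).2.1.trans h1.le, h2.le.trans (dg_mem hbS hx).2.2⟩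
  have hzS : z ∉ SS a b μ := gap_disjoint haS hbS hx ⟨h1, h2⟩
  obtain ⟨hcz, hdz⟩ := cg_const haS hbS hx (⟨h1, h2⟩ : z ∈ Ioo c d)
  rw [W, if_neg (by push_neg; exact ⟨hzS, hzI⟩), hcz, hdz]

end Gap
section Key
variable {a b : ℝ} {μ : Measure ℝ} {u u' v : ℝ → ℝ}

lemma u'_ii (hu'int : IntegrableOn u' (Ioo a b) volume) {x y : ℝ}
    (hx : x ∈ Icc a b) (hy : y ∈ Icc a b) : IntervalIntegrable u' volume x y := by
  have hIoc : IntegrableOn u' (Ioc a b) volume := by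
    rwa [IntegrableOn, Measure.restrict_congr_set Ioo_ae_eq_Ioc] at hu'int
  exact ⟨hIoc.mono_set (Ioc_subset_Ioc hx.1 hy.2),
    hIoc.mono_set (Ioc_subset_Ioc hy.1 hx.2)⟩

lemma INT1 (hu'int : IntegrableOn u' (Ioo a b) volume)
    (huf : ∀ x ∈ Icc a b, u x = u a + ∫ t in a..x, u' t)
    (hvae : ∀ᵐ t ∂(volume : Measure ℝ), t ∈ Ioo a b → v t = |u' t|)
    {x y : ℝ} (hax : a ≤ x) (hxy : x ≤ y) (hyb : y ≤ b) :
    |u y - u x| ≤ ∫ t in x..y, v t := by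
  have hx : x ∈ Icc a b := ⟨hax, hxy.trans hyb⟩
  have hy : y ∈ Icc a b := ⟨hax.trans hxy, hyb⟩
  have hsub : u y - u x = ∫ t in x..y, u' t := by
    rw [huf y hy, huf x hx]
    have := integral_interval_sub_left (u'_ii hu'int (left_mem_Icc.mpr (hax.trans (hxy.trans hyb))) hy)
      (u'_ii hu'int (left_mem_Icc.mpr (hax.trans (hxy.trans hyb))) hx)
    rw [← this]; ring
  rw [hsub]
  refine (abs_integral_le_integral_abs hxy).trans (le_of_eq ?_)
  refine integral_congr_ae ?_
  have hb0 : ∀ᵐ t ∂(volume : Measure ℝ), t ≠ b := by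
    rw [ae_iff]
    have : {t : ℝ | ¬t ≠ b} = {b} := by ext t; simp
    rw [this]
    exact Real.volume_singleton
  filter_upwards [hvae, hb0] with t h1 h2 ht
  rw [uIoc_of_le hxy] at ht
  have : t ∈ Ioo a b := ⟨lt_of_le_of_lt hax ht.1, lt_of_le_of_ne (ht.2.trans hyb) h2⟩
  exact (h1 this).symm

end Key
section Key2
variable {a b : ℝ} {μ : Measure ℝ} {u u' v : ℝ → ℝ}

lemma K1 (hu'int : IntegrableOn u' (Ioo a b) volume)
    (huf : ∀ x ∈ Icc a b, u x = u a + ∫ t in a..x, u' t)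
    (hvae : ∀ᵐ t ∂(volume : Measure ℝ), t ∈ Ioo a b → v t = |u' t|)
    {x y : ℝ} (hxS : x ∈ SS a b μ) (hyS : y ∈ SS a b μ) (hxy : x ≤ y) :
    |W a b μ u y - W a b μ u x| ≤ ∫ r in x..y, v r := by
  rw [W_of_mem hxS, W_of_mem hyS]
  exact (abs_abs_sub_abs_le_abs_sub _ _).trans
    (INT1 hu'int huf hvae (SS_subset hxS).1 hxy (SS_subset hyS).2)

lemma K2 (haS : a ∈ SS a b μ) (hbS : b ∈ SS a b μ)
    (hu'int : IntegrableOn u' (Ioo a b) volume)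
    (huf : ∀ x ∈ Icc a b, u x = u a + ∫ t in a..x, u' t)
    (hvae : ∀ᵐ t ∂(volume : Measure ℝ), t ∈ Ioo a b → v t = |u' t|)
    (hu3 : ∀ c d : ℝ, a ≤ c → c < d → d ≤ b → μ (Ioo c d) = 0 →
      ∃ m q : ℝ, ∀ x ∈ Icc c d, u x = m * x + q)
    {x : ℝ} (hx : x ∈ Icc a b) (hxS : x ∉ SS a b μ)
    {s t : ℝ} (hs : s ∈ Icc (cg a b μ x) (dg a b μ x))
    (ht : t ∈ Icc (cg a b μ x) (dg a b μ x)) (hst : s ≤ t) :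
    |W a b μ u t - W a b μ u s| ≤ ∫ r in s..t, v r := by
  set c := cg a b μ x with hc
  set d := dg a b μ x with hd
  have hca : a ≤ c := (cg_mem haS hx).2.1
  have hdb : d ≤ b := (dg_mem hbS hx).2.2
  have hcd : c < d := (cg_lt haS hx hxS).trans (lt_dg hbS hx hxS)
  obtain ⟨m, q, hmq⟩ := hu3 c d hca hcd hdb (gap_null haS hbS hx)
  set k := (|u d| - |u c|) / (d - c) with hk
  have h1 : W a b μ u t - W a b μ u s = (t - s) * k := by
    rw [W_gap haS hbS hx hxS ht, W_gap haS hbS hx hxS hs]; ring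
  have hudc : u d - u c = m * (d - c) := by
    rw [hmq d ⟨hcd.le, le_refl d⟩, hmq c ⟨le_refl c, hcd.le⟩]; ring
  have huts : u t - u s = m * (t - s) := by
    rw [hmq t ⟨ht.1, ht.2⟩, hmq s ⟨hs.1, hs.2⟩]; ring
  have h3 : |(|u d| - |u c|)| ≤ |m| * (d - c) := by
    have h4 := abs_abs_sub_abs_le_abs_sub (u d) (u c)
    rwa [hudc, abs_mul, abs_of_pos (by linarith : (0:ℝ) < d - c)] at h4
  have hkm : |k| ≤ |m| := by
    rw [hk, abs_div, abs_of_pos (by linarith : (0:ℝ) < d - c),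
      div_le_iff₀ (by linarith : (0:ℝ) < d - c)]
    exact h3
  have h2 : |W a b μ u t - W a b μ u s| ≤ |u t - u s| := by
    rw [h1, huts, abs_mul, abs_mul, mul_comm |m| _]
    exact mul_le_mul_of_nonneg_left hkm (abs_nonneg _)
  exact h2.trans (INT1 hu'int huf hvae (hca.trans hs.1) hst (ht.2.trans hdb))

lemma KS (haS : a ∈ SS a b μ) (hbS : b ∈ SS a b μ)
    (hu'int : IntegrableOn u' (Ioo a b) volume)
    (huf : ∀ x ∈ Icc a b, u x = u a + ∫ t in a..x, u' t)
    (hvae : ∀ᵐ t ∂(volume : Measure ℝ), t ∈ Ioo a b → v t = |u' t|)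
    (hu3 : ∀ c d : ℝ, a ≤ c → c < d → d ≤ b → μ (Ioo c d) = 0 →
      ∃ m q : ℝ, ∀ x ∈ Icc c d, u x = m * x + q)
    (hv_int : Integrable v volume)
    {x y : ℝ} (hxS : x ∈ SS a b μ) (hy : y ∈ Icc a b) (hxy : x ≤ y) :
    |W a b μ u y - W a b μ u x| ≤ ∫ r in x..y, v r := by
  by_cases hyS : y ∈ SS a b μ
  · exact K1 hu'int huf hvae hxS hyS hxy
  · set c := cg a b μ y with hcy
    have hcS : c ∈ SS a b μ := (cg_mem haS hy).1
    have hxc : x ≤ c := le_cg haS hy ⟨hxS, (SS_subset hxS).1, hxy⟩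
    have hcyy : c ≤ y := (cg_mem haS hy).2.2
    have t1 : |W a b μ u c - W a b μ u x| ≤ ∫ r in x..c, v r :=
      K1 hu'int huf hvae hxS hcS hxc
    have t2 : |W a b μ u y - W a b μ u c| ≤ ∫ r in c..y, v r := by
      refine K2 haS hbS hu'int huf hvae hu3 hy hyS
        ⟨le_refl c, hcyy.trans (lt_dg hbS hy hyS).le⟩
        ⟨hcyy, (lt_dg hbS hy hyS).le⟩ hcyy
    have hsplit : (∫ r in x..c, v r) + ∫ r in c..y, v r = ∫ r in x..y, v r :=
      integral_add_adjacent_intervals hv_int.intervalIntegrable hv_int.intervalIntegrable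
    calc |W a b μ u y - W a b μ u x|
        ≤ |W a b μ u y - W a b μ u c| + |W a b μ u c - W a b μ u x| := abs_sub_le _ _ _
      _ ≤ (∫ r in c..y, v r) + ∫ r in x..c, v r := add_le_add t2 t1
      _ = ∫ r in x..y, v r := by rw [← hsplit]; ring

lemma KI (haS : a ∈ SS a b μ) (hbS : b ∈ SS a b μ)
    (hu'int : IntegrableOn u' (Ioo a b) volume)
    (huf : ∀ x ∈ Icc a b, u x = u a + ∫ t in a..x, u' t)
    (hvae : ∀ᵐ t ∂(volume : Measure ℝ), t ∈ Ioo a b → v t = |u' t|)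
    (hu3 : ∀ c d : ℝ, a ≤ c → c < d → d ≤ b → μ (Ioo c d) = 0 →
      ∃ m q : ℝ, ∀ x ∈ Icc c d, u x = m * x + q)
    (hv_int : Integrable v volume)
    {x y : ℝ} (hx : x ∈ Icc a b) (hy : y ∈ Icc a b) (hxy : x ≤ y) :
    |W a b μ u y - W a b μ u x| ≤ ∫ r in x..y, v r := by
  by_cases hxS : x ∈ SS a b μ
  · exact KS haS hbS hu'int huf hvae hu3 hv_int hxS hy hxy
  · set d := dg a b μ x with hdx
    have hdS : d ∈ SS a b μ := (dg_mem hbS hx).1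
    have hcx : cg a b μ x ≤ x := (cg_lt haS hx hxS).le
    have hxd : x ≤ d := (lt_dg hbS hx hxS).le
    by_cases hyd : y ≤ d
    · exact K2 haS hbS hu'int huf hvae hu3 hx hxS ⟨hcx, hxd⟩
        ⟨hcx.trans hxy, hyd⟩ hxy
    · push_neg at hyd
      have t2 : |W a b μ u d - W a b μ u x| ≤ ∫ r in x..d, v r :=
        K2 haS hbS hu'int huf hvae hu3 hx hxS ⟨hcx, hxd⟩ ⟨hcx.trans hxd, le_refl d⟩ hxd
      have t1 : |W a b μ u y - W a b μ u d| ≤ ∫ r in d..y, v r :=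
        KS haS hbS hu'int huf hvae hu3 hv_int hdS hy hyd.le
      have hsplit : (∫ r in x..d, v r) + ∫ r in d..y, v r = ∫ r in x..y, v r :=
        integral_add_adjacent_intervals hv_int.intervalIntegrable hv_int.intervalIntegrable
      calc |W a b μ u y - W a b μ u x|
          ≤ |W a b μ u y - W a b μ u d| + |W a b μ u d - W a b μ u x| := abs_sub_le _ _ _
        _ ≤ (∫ r in d..y, v r) + ∫ r in x..d, v r := add_le_add t1 t2
        _ = ∫ r in x..y, v r := by rw [← hsplit]; ring

lemma W_continuousOn (hv_int : Integrable v volume)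
    (hKI : ∀ x y : ℝ, x ∈ Icc a b → y ∈ Icc a b → x ≤ y →
      |W a b μ u y - W a b μ u x| ≤ ∫ r in x..y, v r) :
    ContinuousOn (W a b μ u) (Icc a b) := by
  set V := fun x : ℝ => ∫ t in a..x, v t with hV
  have hVc : Continuous V := hv_int.continuous_primitive a
  intro x₀ hx₀
  have key : ∀ y ∈ Icc a b, |W a b μ u y - W a b μ u x₀| ≤ |V y - V x₀| := by
    intro y hy
    have hVd : ∀ p q : ℝ, V q - V p = ∫ r in p..q, v r := fun p q =>
      integral_interval_sub_left hv_int.intervalIntegrable hv_int.intervalIntegrable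
    rcases le_total x₀ y with h | h
    · exact (hKI x₀ y hx₀ hy h).trans ((hVd x₀ y ▸ le_abs_self _))
    · rw [abs_sub_comm]
      refine (hKI y x₀ hy hx₀ h).trans ?_
      rw [← hVd y x₀, abs_sub_comm]
      exact le_abs_self _
  have h0 : Filter.Tendsto (fun y => |V y - V x₀|) (nhdsWithin x₀ (Icc a b)) (nhds 0) := by
    have h1 : Filter.Tendsto V (nhdsWithin x₀ (Icc a b)) (nhds (V x₀)) :=
      (hVc.tendsto x₀).mono_left nhdsWithin_le_nhds
    have h2 := (h1.sub_const (V x₀)).abs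
    simpa using h2
  rw [ContinuousWithinAt, tendsto_iff_dist_tendsto_zero]
  refine squeeze_zero' (Filter.Eventually.of_forall fun y => dist_nonneg) ?_ h0
  filter_upwards [self_mem_nhdsWithin] with y hy
  rw [Real.dist_eq]
  exact key y hy

end Key2

lemma exists_deriv {a b : ℝ} (hab : a < b) {w v : ℝ → ℝ}
    (hwc : ContinuousOn w (Icc a b))
    (hvm : Measurable v) (hv_int : Integrable v volume) (hv_nn : ∀ t, 0 ≤ v t)
    (hv2 : MemLp v 2 (volume.restrict (Ioo a b)))
    (hbound : ∀ x y : ℝ, x ∈ Icc a b → y ∈ Icc a b → x ≤ y →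
      |w y - w x| ≤ ∫ r in x..y, v r) :
    ∃ w' : ℝ → ℝ, MemLp w' 2 (volume.restrict (Ioo a b)) ∧
      ∀ x ∈ Icc a b, w x = w a + ∫ t in a..x, w' t := by
  classical
  set π : ℝ → ℝ := fun x => max a (min x b) with hπ
  have hπmono : Monotone π := fun x y h => max_le_max le_rfl (min_le_min h le_rfl)
  have hπmem : ∀ x, π x ∈ Icc a b := fun x => ⟨le_max_left _ _, max_le hab.le (min_le_right _ _)⟩
  have hπid : ∀ x ∈ Icc a b, π x = x := by
    intro x hx
    rw [hπ]
    simp only [min_eq_left hx.2, max_eq_right hx.1]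
  have hπcont : Continuous π := continuous_const.max (continuous_id.min continuous_const)
  set V : ℝ → ℝ := fun x => ∫ t in a..x, v t with hV
  have hVc : Continuous V := hv_int.continuous_primitive a
  have hVd : ∀ p q : ℝ, V q - V p = ∫ r in p..q, v r := fun p q =>
    integral_interval_sub_left hv_int.intervalIntegrable hv_int.intervalIntegrable
  have hIoc : ∀ x y : ℝ, x ≤ y → Ioc (π x) (π y) ⊆ Ioc x y := by
    intro x y hxy t ht
    constructor
    · rcases le_or_gt x b with h | h
      · have h1 : x ≤ π x := le_max_of_le_right (le_min le_rfl h)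
        exact lt_of_le_of_lt h1 ht.1
      · exfalso
        have h1 : π x = b := by rw [hπ]; simp only [min_eq_right h.le, max_eq_right hab.le]
        have h2 : t ≤ b := ht.2.trans (hπmem y).2
        rw [h1] at ht
        linarith [ht.1]
    · rcases le_or_gt a y with h | h
      · have h1 : π y ≤ y := max_le h (min_le_left _ _)
        exact ht.2.trans h1
      · exfalso
        have h1 : π y = a := by
          rw [hπ]; simp only [min_eq_left (by linarith : y ≤ b), max_eq_left h.le]
        have h2 : π x = a := by
          rw [hπ]; simp only [min_eq_left (by linarith : x ≤ b),
            max_eq_left (by linarith : x ≤ a)]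
        rw [h1] at ht; rw [h2] at ht
        exact absurd (ht.1.trans_le ht.2) (lt_irrefl a)
  have hVmono : ∀ p q : ℝ, p ≤ q → V p ≤ V q := by
    intro p q hpq
    have : (0:ℝ) ≤ ∫ r in p..q, v r :=
      intervalIntegral.integral_nonneg hpq fun t _ => hv_nn t
    linarith [hVd p q]
  have hP2 : ∀ x y : ℝ, x ≤ y → V (π y) - V (π x) ≤ V y - V x := by
    intro x y hxy
    rw [hVd (π x) (π y), hVd x y,
      integral_of_le (hπmono hxy), integral_of_le hxy]
    exact setIntegral_mono_set hv_int.integrableOn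
      (Eventually.of_forall fun t => hv_nn t) ((hIoc x y hxy).eventuallyLE)
  set ω : ℝ → ℝ := fun x => w (π x) with hω
  have hωc : Continuous ω := hwc.comp_continuous hπcont hπmem
  have hP1 : ∀ x y : ℝ, x ≤ y → |ω y - ω x| ≤ V (π y) - V (π x) := by
    intro x y hxy
    rw [hVd (π x) (π y)]
    exact hbound (π x) (π y) (hπmem x) (hπmem y) (hπmono hxy)
  -- the four monotone continuous functions
  set g₁ : ℝ → ℝ := fun x => V (π x) - ω x with hg₁
  set g₂ : ℝ → ℝ := fun x => V (π x) + ω x with hg₂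
  set h₁ : ℝ → ℝ := fun x => 2 * V x - g₁ x with hh₁
  set h₂ : ℝ → ℝ := fun x => 2 * V x - g₂ x with hh₂
  have hg₁mono : Monotone g₁ := by
    intro x y hxy
    have := hP1 x y hxy
    rw [abs_le] at this
    simp only [hg₁]
    linarith [this.1]
  have hg₂mono : Monotone g₂ := by
    intro x y hxy
    have := hP1 x y hxy
    rw [abs_le] at this
    simp only [hg₂]
    linarith [this.2]
  have hh₁mono : Monotone h₁ := by
    intro x y hxy
    have h3 := hP1 x y hxy
    rw [abs_le] at h3
    have h4 := hP2 x y hxy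
    have h5 : V (π x) ≤ V (π y) := hVmono _ _ (hπmono hxy)
    simp only [hh₁, hg₁]
    have h6 : V x ≤ V y := hVmono _ _ hxy
    nlinarith [h3.1, h3.2]
  have hh₂mono : Monotone h₂ := by
    intro x y hxy
    have h3 := hP1 x y hxy
    rw [abs_le] at h3
    have h4 := hP2 x y hxy
    simp only [hh₂, hg₂]
    nlinarith [h3.1, h3.2]
  have hg₁c : Continuous g₁ := (hVc.comp hπcont).sub hωc
  have hg₂c : Continuous g₂ := (hVc.comp hπcont).add hωc
  have hh₁c : Continuous h₁ := ((continuous_const.mul hVc)).sub hg₁c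
  have hh₂c : Continuous h₂ := ((continuous_const.mul hVc)).sub hg₂c
  set G₁ : StieltjesFunction ℝ := ⟨g₁, hg₁mono, fun x => hg₁c.continuousAt.continuousWithinAt⟩
  set G₂ : StieltjesFunction ℝ := ⟨g₂, hg₂mono, fun x => hg₂c.continuousAt.continuousWithinAt⟩
  set H₁ : StieltjesFunction ℝ := ⟨h₁, hh₁mono, fun x => hh₁c.continuousAt.continuousWithinAt⟩
  set H₂ : StieltjesFunction ℝ := ⟨h₂, hh₂mono, fun x => hh₂c.continuousAt.continuousWithinAt⟩
  set ρ : Measure ℝ := volume.withDensity (fun t => ENNReal.ofReal (2 * v t)) with hρ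
  have h2vint : Integrable (fun t => 2 * v t) volume := hv_int.const_mul 2
  have hρIoc : ∀ x y : ℝ, ρ (Ioc x y) = ENNReal.ofReal (2 * V y - 2 * V x) := by
    intro x y
    rcases le_or_gt x y with hxy | hxy
    · rw [hρ, withDensity_apply _ measurableSet_Ioc,
        ← ofReal_integral_eq_lintegral_ofReal h2vint.integrableOn
          (Eventually.of_forall fun t => by simp only [Pi.zero_apply]; linarith [hv_nn t])]
      congr 1
      rw [← integral_of_le hxy, intervalIntegral.integral_const_mul]
      have := hVd x y
      linarith [hVd x y]
    · rw [Ioc_eq_empty (by linarith), measure_empty]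
      have h5 : V y ≤ V x := hVmono _ _ hxy.le
      rw [ENNReal.ofReal_eq_zero.mpr (by linarith)]
  have hsum : ∀ (G H : StieltjesFunction ℝ), (∀ x, G x + H x = 2 * V x) →
      G.measure + H.measure = ρ := by
    intro G H hGH
    haveI : IsLocallyFiniteMeasure (G.measure + H.measure) := by
      constructor
      intro x
      refine ⟨Ioo (x - 1) (x + 1), Ioo_mem_nhds (by linarith) (by linarith), ?_⟩
      rw [Measure.add_apply]
      exact ENNReal.add_lt_top.mpr ⟨measure_Ioo_lt_top, measure_Ioo_lt_top⟩
    refine Measure.ext_of_Ioc _ _ fun x y hxy => ?_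
    rw [Measure.add_apply, StieltjesFunction.measure_Ioc, StieltjesFunction.measure_Ioc,
      hρIoc x y, ← ENNReal.ofReal_add (sub_nonneg.mpr (G.mono hxy.le))
        (sub_nonneg.mpr (H.mono hxy.le))]
    congr 1
    have e1 := hGH x
    have e2 := hGH y
    linarith
  have hsum₁ : G₁.measure + H₁.measure = ρ := by
    refine hsum G₁ H₁ fun x => ?_
    show g₁ x + h₁ x = 2 * V x
    simp only [hh₁]; ring
  have hsum₂ : G₂.measure + H₂.measure = ρ := by
    refine hsum G₂ H₂ fun x => ?_
    show g₂ x + h₂ x = 2 * V x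
    simp only [hh₂]; ring
  have hle₁ : G₁.measure ≤ ρ := hsum₁ ▸ Measure.le_add_right (le_refl _)
  have hle₂ : G₂.measure ≤ ρ := hsum₂ ▸ Measure.le_add_right (le_refl _)
  haveI hρfin : IsFiniteMeasure ρ := by
    constructor
    rw [hρ, withDensity_apply _ MeasurableSet.univ, Measure.restrict_univ,
      ← ofReal_integral_eq_lintegral_ofReal h2vint
        (Eventually.of_forall fun t => by simp only [Pi.zero_apply]; linarith [hv_nn t])]
    exact ENNReal.ofReal_lt_top
  haveI hfin₁ : IsFiniteMeasure G₁.measure :=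
    ⟨lt_of_le_of_lt (Measure.le_iff'.1 hle₁ univ) (measure_lt_top ρ _)⟩
  haveI hfin₂ : IsFiniteMeasure G₂.measure :=
    ⟨lt_of_le_of_lt (Measure.le_iff'.1 hle₂ univ) (measure_lt_top ρ _)⟩
  haveI hfinH₁ : IsFiniteMeasure H₁.measure :=
    ⟨lt_of_le_of_lt (Measure.le_iff'.1 (hsum₁ ▸ Measure.le_add_left (le_refl _)) univ)
      (measure_lt_top ρ _)⟩
  haveI hfinH₂ : IsFiniteMeasure H₂.measure :=
    ⟨lt_of_le_of_lt (Measure.le_iff'.1 (hsum₂ ▸ Measure.le_add_left (le_refl _)) univ)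
      (measure_lt_top ρ _)⟩
  have hac₁ : G₁.measure ≪ (volume : Measure ℝ) :=
    (Measure.absolutelyContinuous_of_le hle₁).trans (withDensity_absolutelyContinuous _ _)
  have hac₂ : G₂.measure ≪ (volume : Measure ℝ) :=
    (Measure.absolutelyContinuous_of_le hle₂).trans (withDensity_absolutelyContinuous _ _)
  set d₁ : ℝ → ℝ := fun t => (G₁.measure.rnDeriv volume t).toReal with hd₁
  set d₂ : ℝ → ℝ := fun t => (G₂.measure.rnDeriv volume t).toReal with hd₂
  have hd₁meas : Measurable d₁ := (Measure.measurable_rnDeriv _ _).ennreal_toReal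
  have hd₂meas : Measurable d₂ := (Measure.measurable_rnDeriv _ _).ennreal_toReal
  have hvm2 : Measurable fun t => ENNReal.ofReal (2 * v t) :=
    ((hvm.const_mul 2).ennreal_ofReal)
  have hbnd : ∀ (G H : StieltjesFunction ℝ), IsFiniteMeasure G.measure →
      IsFiniteMeasure H.measure → G.measure + H.measure = ρ →
      ∀ᵐ t ∂(volume : Measure ℝ), G.measure.rnDeriv volume t ≤ ENNReal.ofReal (2 * v t) := by
    intro G H hGfin hHfin hGH
    haveI := hGfin; haveI := hHfin
    have h1 := Measure.rnDeriv_add G.measure H.measure volume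
    rw [hGH] at h1
    have h3 : ρ.rnDeriv volume =ᵐ[volume] fun t => ENNReal.ofReal (2 * v t) :=
      Measure.rnDeriv_withDensity volume hvm2
    filter_upwards [h1, h3] with t ht1 ht3
    calc G.measure.rnDeriv volume t
        ≤ G.measure.rnDeriv volume t + H.measure.rnDeriv volume t := le_self_add
      _ = ρ.rnDeriv volume t := by rw [ht1]; rfl
      _ = ENNReal.ofReal (2 * v t) := ht3
  have hb₁ : ∀ᵐ t ∂(volume : Measure ℝ), d₁ t ≤ 2 * v t := by
    filter_upwards [hbnd G₁ H₁ hfin₁ hfinH₁ hsum₁] with t ht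
    exact ENNReal.toReal_le_of_le_ofReal (by linarith [hv_nn t]) ht
  have hb₂ : ∀ᵐ t ∂(volume : Measure ℝ), d₂ t ≤ 2 * v t := by
    filter_upwards [hbnd G₂ H₂ hfin₂ hfinH₂ hsum₂] with t ht
    exact ENNReal.toReal_le_of_le_ofReal (by linarith [hv_nn t]) ht
  have hd₁nn : ∀ t, 0 ≤ d₁ t := fun t => ENNReal.toReal_nonneg
  have hd₂nn : ∀ t, 0 ≤ d₂ t := fun t => ENNReal.toReal_nonneg
  have hd₁int : Integrable d₁ volume := Measure.integrable_toReal_rnDeriv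
  have hd₂int : Integrable d₂ volume := Measure.integrable_toReal_rnDeriv
  refine ⟨fun t => (d₂ t - d₁ t) / 2, ?_, ?_⟩
  · have hw2 : MemLp (fun t => 2 * v t) 2 (volume.restrict (Ioo a b)) := hv2.const_mul 2
    refine MemLp.of_le hw2 (((hd₂meas.sub hd₁meas).div_const 2).aestronglyMeasurable) ?_
    filter_upwards [ae_restrict_of_ae (hb₁.and hb₂)] with t ht
    obtain ⟨ht1, ht2⟩ := ht
    rw [Real.norm_eq_abs, Real.norm_eq_abs]
    have habs : |d₂ t - d₁ t| ≤ 2 * v t :=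
      abs_sub_le_iff.mpr ⟨by linarith [hd₁nn t], by linarith [hd₂nn t]⟩
    have h2 : |2 * v t| = 2 * v t := abs_of_nonneg (by linarith [hv_nn t])
    rw [h2, abs_div, abs_two]
    linarith [abs_nonneg (d₂ t - d₁ t)]
  · intro x hx
    have hax : a ≤ x := hx.1
    have hIoc₁ : ∫ t in Ioc a x, d₁ t = g₁ x - g₁ a := by
      rw [hd₁, Measure.setIntegral_toReal_rnDeriv hac₁ (Ioc a x),
        measureReal_def, StieltjesFunction.measure_Ioc, ENNReal.toReal_ofReal (sub_nonneg.mpr (hg₁mono hax))]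
    have hIoc₂ : ∫ t in Ioc a x, d₂ t = g₂ x - g₂ a := by
      rw [hd₂, Measure.setIntegral_toReal_rnDeriv hac₂ (Ioc a x),
        measureReal_def, StieltjesFunction.measure_Ioc, ENNReal.toReal_ofReal (sub_nonneg.mpr (hg₂mono hax))]
    have hsubint : ∫ t in Ioc a x, (d₂ t - d₁ t) / 2 =
        ((g₂ x - g₂ a) - (g₁ x - g₁ a)) / 2 := by
      rw [MeasureTheory.integral_div, integral_sub hd₂int.integrableOn hd₁int.integrableOn, hIoc₁, hIoc₂]
    have hωx : ω x = w x := by rw [hω]; simp only []; rw [hπid x hx]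
    have hωa : ω a = w a := by
      rw [hω]; simp only []; rw [hπid a ⟨le_refl a, hab.le⟩]
    have hgg : ((g₂ x - g₂ a) - (g₁ x - g₁ a)) / 2 = w x - w a := by
      simp only [hg₁, hg₂]
      rw [← hωx, ← hωa]; ring
    rw [integral_of_le hax, hsubint, hgg]
    ring

end IotaAbsAux

open IotaAbsAux in
/-- **Absolute value and the map `ι`.**
Let `μ` be a finite Borel measure on `[a,b]` with `a, b ∈ spt μ`, `μ({a,b}) = 0`, and let
`ι = (κ|_{W^1_{2,μ}})^{-1}`.  If `f ∈ D(ι)` is real-valued with `ι f = u ∈ W^1_{2,μ}(a,b)`,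
then `|f| ∈ D(ι)` — i.e. there is `w ∈ W^1_{2,μ}(a,b)` with `w = |u|` `μ`-a.e., so
`w = ι |f|` — and `(ι|f|)(a) = |ιf(a)|`, `(ι|f|)(b) = |ιf(b)|`. -/
theorem iota_abs (a b : ℝ) (hab : a < b) (μ : Measure ℝ) [IsFiniteMeasure μ]
    (hμc : μ (Set.Icc a b)ᶜ = 0)
    (hsa : ∀ ε > 0, 0 < μ (Set.Ico a (a + ε)))
    (hsb : ∀ ε > 0, 0 < μ (Set.Ioc (b - ε) b))
    (hab0 : μ {a, b} = 0)
    (u : ℝ → ℝ) (hu : MemW12mu a b μ u) :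
    ∃ w : ℝ → ℝ, MemW12mu a b μ w ∧ w =ᵐ[μ] (fun x => |u x|) ∧
      w a = |u a| ∧ w b = |u b| := by
  obtain ⟨hucont, ⟨u', hu'2, huf⟩, hu3⟩ := hu
  have haS : a ∈ SS a b μ := mem_SS_a hab.le hsa
  have hbS : b ∈ SS a b μ := mem_SS_b hab.le hsb
  haveI : IsFiniteMeasure (volume.restrict (Ioo a b)) := by
    constructor
    rw [Measure.restrict_apply_univ]
    exact measure_Ioo_lt_top
  have hsm := hu'2.aestronglyMeasurable
  set u'm := hsm.mk u' with hu'm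
  have heq : u' =ᵐ[volume.restrict (Ioo a b)] u'm := hsm.ae_eq_mk
  set v : ℝ → ℝ := (Ioo a b).indicator (fun s => |u'm s|) with hv
  have hvm : Measurable v :=
    (hsm.stronglyMeasurable_mk.measurable.abs).indicator measurableSet_Ioo
  have hv_nn : ∀ t, 0 ≤ v t := fun t => by
    rw [hv]
    exact Set.indicator_apply_nonneg fun _ => abs_nonneg _
  have hvres : v =ᵐ[volume.restrict (Ioo a b)] fun t => |u' t| := by
    filter_upwards [heq, ae_restrict_mem measurableSet_Ioo] with t h1 h2
    rw [hv, Set.indicator_of_mem h2, h1]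
  have hvae : ∀ᵐ t ∂(volume : Measure ℝ), t ∈ Ioo a b → v t = |u' t| :=
    (ae_restrict_iff' measurableSet_Ioo).mp hvres
  have hv2 : MemLp v 2 (volume.restrict (Ioo a b)) := by
    refine MemLp.of_le hu'2 hvm.aestronglyMeasurable ?_
    filter_upwards [hvres] with t h
    rw [h, Real.norm_eq_abs, Real.norm_eq_abs, abs_abs]
  have hv_res_int : Integrable v (volume.restrict (Ioo a b)) := hv2.integrable (by norm_num)
  have hv_int : Integrable v volume := by
    have h1 : Integrable ((Ioo a b).indicator v) volume :=
      (integrable_indicator_iff measurableSet_Ioo).2 hv_res_int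
    have h2 : (Ioo a b).indicator v = v := by
      rw [hv, Set.indicator_indicator, Set.inter_self]
    rwa [h2] at h1
  have hu'int : IntegrableOn u' (Ioo a b) volume := hu'2.integrable (by norm_num)
  have hKI : ∀ x y : ℝ, x ∈ Icc a b → y ∈ Icc a b → x ≤ y →
      |W a b μ u y - W a b μ u x| ≤ ∫ r in x..y, v r := fun x y hx hy hxy =>
    KI haS hbS hu'int huf hvae hu3 hv_int hx hy hxy
  have hwc : ContinuousOn (W a b μ u) (Icc a b) := W_continuousOn hv_int hKI
  obtain ⟨w', hw'2, hw'f⟩ := exists_deriv hab hwc hvm hv_int hv_nn hv2 hKI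
  refine ⟨W a b μ u, ⟨hwc, ⟨w', hw'2, hw'f⟩, ?_⟩, ?_, W_of_mem haS, W_of_mem hbS⟩
  · -- affine on μ-null intervals
    intro c d hac hcd hdb h0
    have hIoo_sub : ∀ t ∈ Ioo c d, t ∉ SS a b μ := by
      intro t ht htS
      have hε : (0:ℝ) < min (t - c) (d - t) := lt_min (by linarith [ht.1]) (by linarith [ht.2])
      have hpos := htS.2 _ hε
      have hsub : Ioo (t - min (t - c) (d - t)) (t + min (t - c) (d - t)) ⊆ Ioo c d := by
        intro s hs
        have h1 := min_le_left (t - c) (d - t)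
        have h2 := min_le_right (t - c) (d - t)
        exact ⟨by linarith [hs.1], by linarith [hs.2]⟩
      exact absurd (measure_mono_null hsub h0) (ne_of_gt hpos)
    set x₀ : ℝ := (c + d) / 2 with hx₀
    have hx₀I : x₀ ∈ Ioo c d := ⟨by rw [hx₀]; linarith, by rw [hx₀]; linarith⟩
    have hx₀Icc : x₀ ∈ Icc a b := ⟨by linarith [hx₀I.1], by linarith [hx₀I.2]⟩
    have hx₀S : x₀ ∉ SS a b μ := hIoo_sub x₀ hx₀I
    have hcc : cg a b μ x₀ ≤ c := by
      refine csSup_le (compact_left haS hx₀Icc).2 fun s hs => ?_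
      by_contra hlt
      push_neg at hlt
      exact hIoo_sub s ⟨hlt, lt_of_le_of_lt hs.2.2 hx₀I.2⟩ hs.1
    have hdd : d ≤ dg a b μ x₀ := by
      refine le_csInf (compact_right hbS hx₀Icc).2 fun s hs => ?_
      by_contra hlt
      push_neg at hlt
      exact hIoo_sub s ⟨lt_of_lt_of_le hx₀I.1 hs.2.1, hlt⟩ hs.1
    refine ⟨(|u (dg a b μ x₀)| - |u (cg a b μ x₀)|) / (dg a b μ x₀ - cg a b μ x₀),
      |u (cg a b μ x₀)| - cg a b μ x₀ *
        ((|u (dg a b μ x₀)| - |u (cg a b μ x₀)|) / (dg a b μ x₀ - cg a b μ x₀)), ?_⟩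
    intro z hz
    have hz' : z ∈ Icc (cg a b μ x₀) (dg a b μ x₀) :=
      ⟨hcc.trans hz.1, hz.2.trans hdd⟩
    rw [W_gap haS hbS hx₀Icc hx₀S hz']
    ring
  · -- a.e. equality
    rw [Filter.EventuallyEq, ae_iff]
    refine measure_mono_null ?_ (null_compl_SS hμc)
    intro x hx
    simp only [mem_setOf_eq] at hx
    intro hxS
    exact hx (W_of_mem hxS)
end

section
/- Let X ⊆ ℝⁿ be a sublattice and L a self-adjoint operator on X such that the semigroup (e^{−tL})_{t≥0} is positivity preserving on X. Then for every real x ∈ X, ⟨L|x|, |x|⟩ ≤ ⟨Lx, x⟩. -/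
open Matrix

section aux
attribute [local instance] Matrix.linftyOpNormedAddCommGroup Matrix.linftyOpNormedRing
  Matrix.linftyOpNormedAlgebra

theorem exp_deriv_aux (n : ℕ) (L : Matrix (Fin n) (Fin n) ℝ) (a x : Fin n → ℝ) :
    HasDerivAt (fun t : ℝ => (NormedSpace.exp (t • (-L))).mulVec a ⬝ᵥ a
        - (NormedSpace.exp (t • (-L))).mulVec x ⬝ᵥ x)
      (L.mulVec x ⬝ᵥ x - L.mulVec a ⬝ᵥ a) 0 := by
  have hE : HasDerivAt (fun t : ℝ => NormedSpace.exp (t • (-L))) (-L) 0 := by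
    have h := hasDerivAt_exp_smul_const (𝕂 := ℝ) (-L) (0 : ℝ)
    simp only [zero_smul, NormedSpace.exp_zero, one_mul] at h
    exact h
  let F : Matrix (Fin n) (Fin n) ℝ →ₗ[ℝ] ℝ :=
    { toFun := fun M => M.mulVec a ⬝ᵥ a - M.mulVec x ⬝ᵥ x
      map_add' := by
        intro M N
        simp [Matrix.add_mulVec, add_dotProduct]
        ring
      map_smul' := by
        intro c M
        simp [Matrix.smul_mulVec, smul_dotProduct, smul_eq_mul]
        ring }
  have hF := (F.toContinuousLinearMap.hasFDerivAt
    (x := NormedSpace.exp ((0:ℝ) • (-L)))).comp_hasDerivAt 0 hE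
  have : F (-L) = L.mulVec x ⬝ᵥ x - L.mulVec a ⬝ᵥ a := by
    simp [F, Matrix.neg_mulVec, neg_dotProduct]
    ring
  rw [← this]
  exact hF

end aux

/-- **First Beurling–Deny criterion, finite-dimensional version (necessity).**
Let `X ⊆ ℝⁿ` be a sublattice (closed under componentwise absolute value) and `L` a
self-adjoint operator on `X` (encoded as a matrix preserving `X`, symmetric with respect
to the standard inner product on `X`) such that the semigroup `(e^{-tL})_{t≥0}` is
positivity preserving on `X`.  Then for every `x ∈ X`, `⟨L|x|, |x|⟩ ≤ ⟨Lx, x⟩`. -/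
theorem beurling_deny_first (n : ℕ) (X : Submodule ℝ (Fin n → ℝ))
    (hlat : ∀ x ∈ X, (fun i => |x i|) ∈ X)
    (L : Matrix (Fin n) (Fin n) ℝ)
    (hLX : ∀ x ∈ X, L.mulVec x ∈ X)
    (hLsym : ∀ x ∈ X, ∀ y ∈ X, L.mulVec x ⬝ᵥ y = x ⬝ᵥ L.mulVec y)
    (hpos : ∀ t : ℝ, 0 ≤ t → ∀ x ∈ X, (∀ i, 0 ≤ x i) →
      ∀ i, 0 ≤ (NormedSpace.exp ((-t) • L)).mulVec x i) :
    ∀ x ∈ X, L.mulVec (fun i => |x i|) ⬝ᵥ (fun i => |x i|) ≤ L.mulVec x ⬝ᵥ x := by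
  intro x hx
  set a : Fin n → ℝ := fun i => |x i| with ha
  have haX : a ∈ X := hlat x hx
  -- the nonnegative function g
  set g : ℝ → ℝ := fun t => (NormedSpace.exp (t • (-L))).mulVec a ⬝ᵥ a
      - (NormedSpace.exp (t • (-L))).mulVec x ⬝ᵥ x with hg
  have hsmul : ∀ t : ℝ, t • (-L) = (-t) • L := by
    intro t; rw [smul_neg, neg_smul]
  have hgnonneg : ∀ t : ℝ, 0 ≤ t → 0 ≤ g t := by
    intro t ht
    set P := NormedSpace.exp (t • (-L)) with hP
    have hPt : P = NormedSpace.exp ((-t) • L) := by rw [hP, hsmul]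
    have huX : a + x ∈ X := X.add_mem haX hx
    have hvX : a - x ∈ X := X.sub_mem haX hx
    have hu0 : ∀ i, 0 ≤ (a + x) i := by
      intro i
      have := neg_abs_le (x i)
      simp only [Pi.add_apply, ha]
      linarith
    have hv0 : ∀ i, 0 ≤ (a - x) i := by
      intro i; simpa [ha, Pi.sub_apply, sub_nonneg] using le_abs_self (x i)
    have h1 : ∀ i, 0 ≤ P.mulVec (a + x) i := by
      rw [hPt]; exact hpos t ht _ huX hu0
    have h2 : ∀ i, 0 ≤ P.mulVec (a - x) i := by
      rw [hPt]; exact hpos t ht _ hvX hv0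
    have d1 : 0 ≤ P.mulVec (a + x) ⬝ᵥ (a - x) := by
      apply Finset.sum_nonneg
      intro i _
      exact mul_nonneg (h1 i) (hv0 i)
    have d2 : 0 ≤ P.mulVec (a - x) ⬝ᵥ (a + x) := by
      apply Finset.sum_nonneg
      intro i _
      exact mul_nonneg (h2 i) (hu0 i)
    have e1 : P.mulVec (a + x) ⬝ᵥ (a - x)
        = P.mulVec a ⬝ᵥ a - P.mulVec a ⬝ᵥ x + P.mulVec x ⬝ᵥ a - P.mulVec x ⬝ᵥ x := by
      simp [Matrix.mulVec_add, add_dotProduct, dotProduct_sub]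
      ring
    have e2 : P.mulVec (a - x) ⬝ᵥ (a + x)
        = P.mulVec a ⬝ᵥ a + P.mulVec a ⬝ᵥ x - P.mulVec x ⬝ᵥ a - P.mulVec x ⬝ᵥ x := by
      simp [Matrix.mulVec_sub, sub_dotProduct, dotProduct_add]
      ring
    have : 0 ≤ 2 * g t := by
      rw [hg]
      simp only
      rw [e1] at d1; rw [e2] at d2
      linarith
    linarith
  -- g 0 = 0
  have hg0 : g 0 = 0 := by
    simp only [hg, zero_smul, NormedSpace.exp_zero, Matrix.one_mulVec]
    have : a ⬝ᵥ a = x ⬝ᵥ x := by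
      apply Finset.sum_congr rfl
      intro i _
      simp [ha, abs_mul_abs_self]
    rw [this, sub_self]
  -- derivative of g at 0
  have hder : HasDerivAt g (L.mulVec x ⬝ᵥ x - L.mulVec a ⬝ᵥ a) 0 :=
    exp_deriv_aux n L a x
  -- the right slope is nonnegative, hence the derivative is nonnegative
  have hslope : Filter.Tendsto (fun t : ℝ => g t / t) (nhdsWithin 0 (Set.Ioi 0))
      (nhds (L.mulVec x ⬝ᵥ x - L.mulVec a ⬝ᵥ a)) := by
    have h := hder.hasDerivWithinAt (s := Set.Ioi 0)
    have h2 := (hasDerivWithinAt_iff_tendsto_slope.mp h)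
    have hss : nhdsWithin (0:ℝ) (Set.Ioi 0 \ {0}) = nhdsWithin 0 (Set.Ioi 0) := by
      congr 1
      ext t
      simp only [Set.mem_diff, Set.mem_Ioi, Set.mem_singleton_iff]
      constructor
      · rintro ⟨h, _⟩; exact h
      · intro h; exact ⟨h, ne_of_gt h⟩
    rw [hss] at h2
    refine h2.congr' ?_
    filter_upwards [self_mem_nhdsWithin] with t ht
    simp [slope, hg0, ht, div_eq_inv_mul]
  have hge : 0 ≤ L.mulVec x ⬝ᵥ x - L.mulVec a ⬝ᵥ a := by
    refine ge_of_tendsto hslope ?_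
    filter_upwards [self_mem_nhdsWithin] with t ht
    exact div_nonneg (hgnonneg t (le_of_lt ht)) (le_of_lt ht)
  linarith
end
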